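/- Let s, c₁, c₂ be positive real numbers and let a : ℕ → ℝ satisfy 0 ≤ a(n) and c₂·n^s ≤ a(n) ≤ c₁·n^s for all integers n ≥ 1, and fix L ∈ ℕ. Then the ratio (∑_{n = max(1, Λ−L)}^{Λ+L} a(n)) / (∑_{n=1}^{Λ} a(n)) tends to 0 as the integer Λ tends to infinity. -/

import Mathlib

/-- If `a : ℕ → ℝ` is nonnegative and comparable to `n^s`
(`c₂ n^s ≤ a n ≤ c₁ n^s` for `n ≥ 1`, with `s, c₁, c₂ > 0`), then for every
fixed width `L ∈ ℕ` the ratio of the shell sum `∑_{n = max(1, Λ−L)}^{Λ+L} a n`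
to the ball sum `∑_{n=1}^{Λ} a n` tends to `0` as `Λ → ∞`. -/
theorem stmt_3 (s c₁ c₂ : ℝ) (hs : 0 < s) (hc₁ : 0 < c₁) (hc₂ : 0 < c₂)
    (a : ℕ → ℝ) (ha : ∀ n, 0 ≤ a n)
    (hlow : ∀ n : ℕ, 1 ≤ n → c₂ * (n : ℝ) ^ s ≤ a n)
    (hup : ∀ n : ℕ, 1 ≤ n → a n ≤ c₁ * (n : ℝ) ^ s)
    (L : ℕ) :
    Filter.Tendsto
      (fun Λ : ℕ =>
        (∑ n ∈ Finset.Icc (max 1 (Λ - L)) (Λ + L), a n) /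
          (∑ n ∈ Finset.Icc 1 Λ, a n))
      Filter.atTop (nhds 0) := by
  set C : ℝ := (2 * (L : ℝ) + 1) * c₁ * (4 : ℝ) ^ s * 2 / c₂ with hCdef
  have hC : 0 < C := by
    apply div_pos _ hc₂
    have : (0:ℝ) < (4:ℝ) ^ s := Real.rpow_pos_of_pos (by norm_num) s
    positivity
  have htend : Filter.Tendsto (fun Λ : ℕ => C / (Λ : ℝ)) Filter.atTop (nhds 0) :=
    tendsto_const_div_atTop_nhds_zero_nat C
  refine tendsto_of_tendsto_of_tendsto_of_le_of_le' tendsto_const_nhds htend ?_ ?_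
  · exact Filter.Eventually.of_forall fun Λ =>
      div_nonneg (Finset.sum_nonneg fun n _ => ha n) (Finset.sum_nonneg fun n _ => ha n)
  · rw [Filter.eventually_atTop]
    refine ⟨L + 1, fun Λ hΛ => ?_⟩
    have h1 : 1 ≤ Λ := by omega
    have hΛpos : (0:ℝ) < (Λ : ℝ) := by exact_mod_cast h1
    -- Shell bound
    have hmax : max 1 (Λ - L) = Λ - L := max_eq_right (by omega)
    have hshell : ∑ n ∈ Finset.Icc (max 1 (Λ - L)) (Λ + L), a n
        ≤ (2 * (L : ℝ) + 1) * (c₁ * (2 * (Λ : ℝ)) ^ s) := by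
      rw [hmax]
      have hb : ∀ n ∈ Finset.Icc (Λ - L) (Λ + L), a n ≤ c₁ * (2 * (Λ : ℝ)) ^ s := by
        intro n hn
        rw [Finset.mem_Icc] at hn
        have hn1 : 1 ≤ n := by omega
        refine (hup n hn1).trans ?_
        have hle : (n : ℝ) ≤ 2 * (Λ : ℝ) := by
          have : n ≤ 2 * Λ := by omega
          exact_mod_cast this
        exact mul_le_mul_of_nonneg_left
          (Real.rpow_le_rpow (by positivity) hle hs.le) hc₁.le
      calc ∑ n ∈ Finset.Icc (Λ - L) (Λ + L), a n
          ≤ (Finset.Icc (Λ - L) (Λ + L)).card • (c₁ * (2 * (Λ : ℝ)) ^ s) :=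
            Finset.sum_le_card_nsmul _ _ _ hb
        _ = (2 * (L : ℝ) + 1) * (c₁ * (2 * (Λ : ℝ)) ^ s) := by
            rw [Nat.card_Icc, nsmul_eq_mul]
            congr 1
            have : Λ + L + 1 - (Λ - L) = 2 * L + 1 := by omega
            rw [this]
            push_cast
            ring
    -- Ball bound
    have hball : ((Λ : ℝ) / 2) * (c₂ * ((Λ : ℝ) / 2) ^ s) ≤ ∑ n ∈ Finset.Icc 1 Λ, a n := by
      have hsub : Finset.Icc (Λ / 2 + 1) Λ ⊆ Finset.Icc 1 Λ := by
        intro n hn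
        rw [Finset.mem_Icc] at hn ⊢
        omega
      have hb : ∀ n ∈ Finset.Icc (Λ / 2 + 1) Λ, c₂ * ((Λ : ℝ) / 2) ^ s ≤ a n := by
        intro n hn
        rw [Finset.mem_Icc] at hn
        have hn1 : 1 ≤ n := by omega
        refine le_trans ?_ (hlow n hn1)
        have hle : (Λ : ℝ) / 2 ≤ (n : ℝ) := by
          have : Λ ≤ 2 * n := by omega
          have := (Nat.cast_le (α := ℝ)).2 this
          push_cast at this
          linarith
        exact mul_le_mul_of_nonneg_left
          (Real.rpow_le_rpow (by positivity) hle hs.le) hc₂.le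
      have hcard : ((Λ : ℝ) / 2) ≤ ((Finset.Icc (Λ / 2 + 1) Λ).card : ℝ) := by
        rw [Nat.card_Icc]
        have : Λ + 1 - (Λ / 2 + 1) = Λ - Λ / 2 := by omega
        rw [this, Nat.cast_sub (Nat.div_le_self _ _)]
        have h2 : ((Λ / 2 : ℕ) : ℝ) ≤ (Λ : ℝ) / 2 := by
          have := Nat.cast_div_le (m := Λ) (n := 2) (α := ℝ)
          simpa using this
        linarith
      calc ((Λ : ℝ) / 2) * (c₂ * ((Λ : ℝ) / 2) ^ s)
          ≤ ((Finset.Icc (Λ / 2 + 1) Λ).card : ℝ) * (c₂ * ((Λ : ℝ) / 2) ^ s) := by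
            apply mul_le_mul_of_nonneg_right hcard
            have : (0:ℝ) < ((Λ : ℝ) / 2) ^ s := Real.rpow_pos_of_pos (by positivity) s
            positivity
        _ ≤ ∑ n ∈ Finset.Icc (Λ / 2 + 1) Λ, a n := by
            have := Finset.card_nsmul_le_sum (Finset.Icc (Λ / 2 + 1) Λ) a _ hb
            simpa [nsmul_eq_mul] using this
        _ ≤ ∑ n ∈ Finset.Icc 1 Λ, a n :=
            Finset.sum_le_sum_of_subset_of_nonneg hsub fun n _ _ => ha n
    have hballpos : 0 < ∑ n ∈ Finset.Icc 1 Λ, a n := by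
      refine lt_of_lt_of_le ?_ hball
      have : (0:ℝ) < ((Λ : ℝ) / 2) ^ s := Real.rpow_pos_of_pos (by positivity) s
      positivity
    rw [div_le_div_iff₀ hballpos hΛpos]
    have hkey : (2 * (Λ : ℝ)) ^ s = 4 ^ s * ((Λ : ℝ) / 2) ^ s := by
      rw [← Real.mul_rpow (by norm_num) (by positivity)]
      congr 1
      ring
    calc (∑ n ∈ Finset.Icc (max 1 (Λ - L)) (Λ + L), a n) * (Λ : ℝ)
        ≤ ((2 * (L : ℝ) + 1) * (c₁ * (2 * (Λ : ℝ)) ^ s)) * (Λ : ℝ) :=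
          mul_le_mul_of_nonneg_right hshell hΛpos.le
      _ = C * (((Λ : ℝ) / 2) * (c₂ * ((Λ : ℝ) / 2) ^ s)) := by
          rw [hCdef, hkey]
          field_simp
      _ ≤ C * ∑ n ∈ Finset.Icc 1 Λ, a n := mul_le_mul_of_nonneg_left hball hC.le
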